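/- Let M be a matroid on N_n whose rank function spans an extreme ray of Γ_n, with r_M(N_n) = 2, and suppose there exists i ∈ N_n \ {1,2} such that {1,2,i} is a circuit of M and every j ∈ N_n \ {1,2,i} is either parallel to i in M or a loop of M. If v ∈ χ_M, log(v−1) < a ≤ log v, and a + b ≥ log v (with b ≥ 0), then a·r_M + b·r_{U_{1,2}^n} is entropic. -/

import Mathlib

open Finset

/-- Shannon entropy (natural log) of the random variable `X : Ω → S`
under the probability mass function `p : Ω → ℝ`. -/
noncomputable def Hent {Ω S : Type} [Fintype Ω] [DecidableEq S]
    (p : Ω → ℝ) (X : Ω → S) : ℝ :=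
  ∑ s ∈ Finset.univ.image X,
    Real.negMulLog (∑ ω ∈ Finset.univ.filter (fun ω => X ω = s), p ω)

/-- The joint random variable `(X_i)_{i ∈ A}`. -/
def joint {Ω : Type} {n : ℕ} (X : Fin n → Ω → ℕ) (A : Finset (Fin n)) :
    Ω → (A → ℕ) :=
  fun ω i => X i ω

/-- A set function `h : 2^{N_n} → ℝ` is entropic if it is the entropy function of
some random vector `(X_1, …, X_n)` on a finite probability space. -/
def IsEntropic {n : ℕ} (h : Finset (Fin n) → ℝ) : Prop :=
  ∃ (N : ℕ) (p : Fin N → ℝ) (X : Fin n → Fin N → ℕ),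
    (∀ ω, 0 ≤ p ω) ∧ (∑ ω, p ω) = 1 ∧
    ∀ A : Finset (Fin n), h A = Hent p (joint X A)

/-- The polymatroidal region Γ_n. -/
def PolymatroidRegion (n : ℕ) : Set (Finset (Fin n) → ℝ) :=
  {h | h ∅ = 0 ∧ (∀ A, 0 ≤ h A) ∧ (∀ A B, A ⊆ B → h A ≤ h B) ∧
       (∀ A B, h (A ∩ B) + h (A ∪ B) ≤ h A + h B)}

/-- A nonzero `h ∈ Γ_n` spans an extreme ray of `Γ_n` if whenever `h₁, h₂ ∈ Γ_n` and
`h₁ + h₂` is a nonnegative multiple of `h`, both `h₁` and `h₂` are nonnegative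
multiples of `h`. -/
def SpansExtremeRay {n : ℕ} (h : Finset (Fin n) → ℝ) : Prop :=
  h ∈ PolymatroidRegion n ∧ h ≠ 0 ∧
  ∀ h₁ h₂ : Finset (Fin n) → ℝ, h₁ ∈ PolymatroidRegion n → h₂ ∈ PolymatroidRegion n →
    (∃ c : ℝ, 0 ≤ c ∧ h₁ + h₂ = c • h) →
    (∃ c₁ : ℝ, 0 ≤ c₁ ∧ h₁ = c₁ • h) ∧ (∃ c₂ : ℝ, 0 ≤ c₂ ∧ h₂ = c₂ • h)

/-- `F ⊆ Γ_n` is a face of `Γ_n` if whenever `h₁, h₂ ∈ Γ_n` and `h₁ + h₂ ∈ F`,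
both `h₁` and `h₂` lie in `F`. -/
def IsFace (n : ℕ) (F : Set (Finset (Fin n) → ℝ)) : Prop :=
  F ⊆ PolymatroidRegion n ∧
  ∀ h₁ h₂ : Finset (Fin n) → ℝ, h₁ ∈ PolymatroidRegion n → h₂ ∈ PolymatroidRegion n →
    h₁ + h₂ ∈ F → h₁ ∈ F ∧ h₂ ∈ F

/-- A matroid on ground set `N_n`, given by its rank function. -/
structure MatroidRk (n : ℕ) where
  r : Finset (Fin n) → ℕ
  le_card : ∀ A, r A ≤ A.card
  mono : ∀ ⦃A B : Finset (Fin n)⦄, A ⊆ B → r A ≤ r B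
  submod : ∀ A B : Finset (Fin n), r (A ∩ B) + r (A ∪ B) ≤ r A + r B

/-- The rank function of a matroid, viewed as a real-valued set function. -/
def MatroidRk.rr {n : ℕ} (M : MatroidRk n) : Finset (Fin n) → ℝ :=
  fun A => (M.r A : ℝ)

/-- A set is independent if its rank equals its cardinality. -/
def MatroidRk.Indep {n : ℕ} (M : MatroidRk n) (A : Finset (Fin n)) : Prop :=
  M.r A = A.card

/-- A circuit is a minimal dependent set. -/
def MatroidRk.IsCircuit {n : ℕ} (M : MatroidRk n) (C : Finset (Fin n)) : Prop :=
  ¬ M.Indep C ∧ ∀ A ⊂ C, M.Indep A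

/-- An element is a loop if its rank is zero. -/
def MatroidRk.IsLoop {n : ℕ} (M : MatroidRk n) (e : Fin n) : Prop :=
  M.r {e} = 0

/-- Two distinct elements are parallel if each has rank one and together they have rank one. -/
def MatroidRk.Parallel {n : ℕ} (M : MatroidRk n) (e f : Fin n) : Prop :=
  e ≠ f ∧ M.r {e} = 1 ∧ M.r {f} = 1 ∧ M.r {e, f} = 1

/-- The subset `{1, …, k}` of `N_n` (in `Fin n`, the elements with value `< k`). -/
def alphaSet (n k : ℕ) : Finset (Fin n) :=
  Finset.univ.filter (fun i => (i : ℕ) < k)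

/-- The rank function of the rank-one matroid `U_{1,k}^n`:
`A ↦ 1` if `A ∩ {1, …, k} ≠ ∅` and `0` otherwise. -/
def rUone (n k : ℕ) : Finset (Fin n) → ℝ :=
  fun A => if (A ∩ alphaSet n k).Nonempty then 1 else 0

/-- The rank function of the uniform matroid `U_{n-1,n}`: `A ↦ min (n-1) |A|`. -/
def rUnif (n : ℕ) : Finset (Fin n) → ℝ :=
  fun A => ((min (n - 1) A.card : ℕ) : ℝ)

/-- The p-characteristic set `χ_M` of a matroid `M`. -/
def chi {n : ℕ} (M : MatroidRk n) : Set ℤ :=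
  {v | 2 ≤ v ∧ IsEntropic (fun A => Real.log (v : ℝ) * M.rr A)}

set_option linter.unusedVariables false

-- ===================== auxiliary lemmas =====================

set_option linter.unusedSectionVars false in
lemma Hent_congr' {Ω S T : Type} [Fintype Ω] [DecidableEq S] [DecidableEq T]
    (p : Ω → ℝ) (X : Ω → S) (X' : Ω → T) (f : S → T) (g : T → S)
    (hf : ∀ ω, f (X ω) = X' ω) (hg : ∀ ω, g (X' ω) = X ω) :
    Hent p X = Hent p X' := by
  have key : ∀ ω, g (f (X ω)) = X ω := fun ω => by rw [hf, hg]
  unfold Hent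
  apply Finset.sum_bij (fun s _ => f s)
  · intro s hs
    simp only [Finset.mem_image, Finset.mem_univ, true_and] at hs ⊢
    obtain ⟨ω, rfl⟩ := hs
    exact ⟨ω, (hf ω).symm⟩
  · intro s1 hs1 s2 hs2 h
    simp only [Finset.mem_image, Finset.mem_univ, true_and] at hs1 hs2
    obtain ⟨ω1, rfl⟩ := hs1; obtain ⟨ω2, rfl⟩ := hs2
    have := congrArg g h
    rwa [key, key] at this
  · intro t ht
    simp only [Finset.mem_image, Finset.mem_univ, true_and] at ht ⊢
    obtain ⟨ω, rfl⟩ := ht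
    exact ⟨X ω, ⟨ω, rfl⟩, hf ω⟩
  · intro s hs
    simp only [Finset.mem_image, Finset.mem_univ, true_and] at hs
    obtain ⟨ω0, rfl⟩ := hs
    congr 1
    apply Finset.sum_congr _ (fun _ _ => rfl)
    ext ω
    simp only [Finset.mem_filter, Finset.mem_univ, true_and]
    constructor
    · intro h; rw [← hf, h, hf]
    · intro h
      have : g (X' ω) = g (f (X ω0)) := by rw [h, hf]
      rwa [hg, key] at this

lemma Hent_reindex' {Ω Ω' S : Type} [Fintype Ω] [Fintype Ω'] [DecidableEq S]
    (e : Ω' ≃ Ω) (p : Ω → ℝ) (X : Ω → S) :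
    Hent (p ∘ e) (X ∘ e) = Hent p X := by
  unfold Hent
  have himg : Finset.univ.image (X ∘ e) = Finset.univ.image X := by
    ext s
    simp only [Finset.mem_image, Finset.mem_univ, true_and, Function.comp_apply]
    exact ⟨fun ⟨ω, h⟩ => ⟨e ω, h⟩, fun ⟨ω, h⟩ => ⟨e.symm ω, by simpa using h⟩⟩
  rw [himg]
  apply Finset.sum_congr rfl
  intro s _
  congr 1
  apply Finset.sum_nbij' (fun ω' => e ω') (fun ω => e.symm ω) <;>
    simp [Function.comp_apply]

lemma Hent_id' {α : Type} [Fintype α] [DecidableEq α] (p : α → ℝ) :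
    Hent p id = ∑ x, Real.negMulLog (p x) := by
  unfold Hent
  rw [Finset.image_id]
  apply Finset.sum_congr rfl
  intro x _
  congr 1
  rw [Finset.sum_filter]
  simp

lemma Hent_const' {Ω S : Type} [Fintype Ω] [Nonempty Ω] [DecidableEq S] (p : Ω → ℝ)
    (c : S) : Hent p (fun _ => c) = Real.negMulLog (∑ ω, p ω) := by
  unfold Hent
  rw [Finset.image_const Finset.univ_nonempty c, Finset.sum_singleton]
  simp

lemma sum_negMulLog_mul' {α β : Type} [Fintype α] [Fintype β] (q : α → ℝ) (r : β → ℝ) :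
    ∑ x : α × β, Real.negMulLog (q x.1 * r x.2)
      = (∑ y, r y) * (∑ x, Real.negMulLog (q x)) + (∑ x, q x) * (∑ y, Real.negMulLog (r y)) := by
  rw [Fintype.sum_prod_type]
  simp_rw [Real.negMulLog_mul, Finset.sum_add_distrib, ← Finset.mul_sum, ← Finset.sum_mul]
  rw [← Finset.mul_sum]

lemma Hent_fst' {α β : Type} [Fintype α] [Fintype β] [DecidableEq α] [Nonempty β]
    (q : α → ℝ) (r : β → ℝ) (hr : ∑ y, r y = 1) :
    Hent (fun ω : α × β => q ω.1 * r ω.2) Prod.fst = ∑ x, Real.negMulLog (q x) := by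
  unfold Hent
  have himg : (Finset.univ : Finset (α × β)).image Prod.fst = Finset.univ := by
    apply Finset.image_univ_of_surjective Prod.fst_surjective
  rw [himg]
  apply Finset.sum_congr rfl
  intro x _
  congr 1
  rw [Finset.sum_filter, Fintype.sum_prod_type]
  have : ∀ x' : α, ∑ y : β, (if (x', y).1 = x then q (x', y).1 * r (x', y).2 else 0)
      = if x' = x then q x' else 0 := by
    intro x'
    by_cases h : x' = x
    · simp only [h, if_true, ← Finset.mul_sum, hr, mul_one]
    · simp [h]
  simp_rw [this]
  simp

lemma exists_pmf_entropy (m : ℕ) (hm : 2 ≤ m) (c : ℝ) (hc0 : 0 ≤ c)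
    (hcm : c ≤ Real.log m) :
    ∃ q : Fin m → ℝ, (∀ x, 0 ≤ q x) ∧ (∑ x, q x) = 1 ∧
      (∑ x, Real.negMulLog (q x)) = c := by
  have hm1 : (1:ℝ) ≤ (m:ℝ) - 1 := by
    have : (2:ℝ) ≤ m := by exact_mod_cast hm
    linarith
  have hmpos : (0:ℝ) < m := by linarith
  have hmne : ((m:ℝ) - 1) ≠ 0 := by linarith
  set E : ℝ → ℝ := fun t => Real.negMulLog t + ((m:ℝ) - 1) * Real.negMulLog ((1 - t)/((m:ℝ)-1))
    with hE
  have hcont : Continuous E := by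
    apply Continuous.add Real.continuous_negMulLog
    exact continuous_const.mul (Real.continuous_negMulLog.comp (by continuity))
  have hinv : (1 - 1/(m:ℝ))/((m:ℝ)-1) = 1/(m:ℝ) := by
    field_simp
  have hnmlinv : Real.negMulLog (1/(m:ℝ)) = (1/(m:ℝ)) * Real.log m := by
    rw [Real.negMulLog, one_div, Real.log_inv]
    ring
  have hE0 : E (1/(m:ℝ)) = Real.log m := by
    rw [hE]; simp only [hinv, hnmlinv]
    field_simp
    ring
  have hE1 : E 1 = 0 := by
    rw [hE]; simp
  have hle : 1/(m:ℝ) ≤ 1 := by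
    rw [div_le_one hmpos]; linarith
  have := intermediate_value_Icc' hle hcont.continuousOn
  have hc : c ∈ Set.Icc (E 1) (E (1/(m:ℝ))) := by
    rw [hE0, hE1]; exact ⟨hc0, hcm⟩
  obtain ⟨t, ht, hEt⟩ := this hc
  obtain ⟨ht1, ht2⟩ := ht
  have htpos : 0 ≤ t := le_trans (by positivity) ht1
  have hdpos : 0 ≤ (1 - t)/((m:ℝ)-1) := by
    apply div_nonneg (by linarith) (by linarith)
  set z0 : Fin m := ⟨0, by omega⟩ with hz0
  have hcast : ((m - 1 : ℕ) : ℝ) = (m:ℝ) - 1 := by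
    rw [Nat.cast_sub (by omega)]; simp
  refine ⟨fun x => if x = z0 then t else (1 - t)/((m:ℝ)-1), fun x => by
    dsimp only; split <;> assumption, ?_, ?_⟩
  · rw [Finset.sum_ite, Finset.filter_eq' Finset.univ, if_pos (Finset.mem_univ z0),
      Finset.sum_singleton, Finset.filter_ne' Finset.univ, Finset.sum_const,
      Finset.card_erase_of_mem (Finset.mem_univ z0), Finset.card_univ, Fintype.card_fin]
    rw [nsmul_eq_mul, hcast]
    field_simp
    ring
  · simp_rw [apply_ite Real.negMulLog]
    rw [Finset.sum_ite, Finset.filter_eq' Finset.univ, if_pos (Finset.mem_univ z0),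
      Finset.sum_singleton, Finset.filter_ne' Finset.univ, Finset.sum_const,
      Finset.card_erase_of_mem (Finset.mem_univ z0), Finset.card_univ, Fintype.card_fin]
    rw [nsmul_eq_mul, hcast, ← hEt, hE]

lemma MatroidRk.subadd {n : ℕ} (M : MatroidRk n) (A : Finset (Fin n)) :
    M.r A ≤ ∑ x ∈ A, M.r {x} := by
  induction A using Finset.induction_on with
  | empty => simpa using M.le_card ∅
  | @insert x A hx ih =>
    have hsub := M.submod {x} A
    have h1 : insert x A = {x} ∪ A := by rw [Finset.insert_eq]
    rw [Finset.sum_insert hx, h1]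
    omega

lemma MatroidRk.pair_le_sum {n : ℕ} (M : MatroidRk n) (x y : Fin n) :
    M.r {x, y} ≤ M.r {x} + M.r {y} := by
  by_cases hxy : x = y
  · subst hxy
    have hp : ({x, x} : Finset (Fin n)) = {x} := by simp
    rw [hp]; omega
  · have := M.subadd {x, y}
    rwa [Finset.sum_pair hxy] at this

lemma MatroidRk.rank_le_one {n : ℕ} (M : MatroidRk n) (x : Fin n) (A : Finset (Fin n))
    (hx : M.r {x} = 1) (hA : ∀ j ∈ A, M.r {x, j} ≤ 1) :
    M.r (insert x A) ≤ 1 := by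
  induction A using Finset.induction_on with
  | empty => simp [hx]
  | @insert j A hj ih =>
    have h1 : M.r (insert x A) ≤ 1 := ih (fun k hk => hA k (Finset.mem_insert_of_mem hk))
    have hsub := M.submod (insert x A) {x, j}
    have hint : M.r {x} ≤ M.r ((insert x A) ∩ {x, j}) := M.mono (by simp)
    have hun : insert x (insert j A) ⊆ (insert x A) ∪ {x, j} := by
      intro k; simp
    have hmon := M.mono hun
    have hxj := hA j (Finset.mem_insert_self j A)
    omega

section Ranks
set_option linter.unusedSectionVars false
variable {n : ℕ} (M : MatroidRk n) (e0 e1 i : Fin n)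
  (h01 : e0 ≠ e1) (hi0 : i ≠ e0) (hi1 : i ≠ e1)
  (hcirc : M.IsCircuit {e0, e1, i})
  (hpar : ∀ j, j ∉ ({e0, e1, i} : Finset (Fin n)) → M.Parallel j i ∨ M.IsLoop j)

include h01 hi0 hi1 hcirc

lemma r_e0 : M.r {e0} = 1 := by
  have h := hcirc.2 {e0} (by
    rw [Finset.ssubset_iff_subset_ne]
    constructor
    · intro k hk; simp at hk; simp [hk]
    · intro h; have : e1 ∈ ({e0} : Finset (Fin n)) := by rw [h]; simp
      simp at this; exact h01 this.symm)
  simpa [MatroidRk.Indep] using h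

lemma r_e1 : M.r {e1} = 1 := by
  have h := hcirc.2 {e1} (by
    rw [Finset.ssubset_iff_subset_ne]
    constructor
    · intro k hk; simp at hk; simp [hk]
    · intro h; have : e0 ∈ ({e1} : Finset (Fin n)) := by rw [h]; simp
      simp at this; exact h01 this)
  simpa [MatroidRk.Indep] using h

lemma r_i : M.r {i} = 1 := by
  have h := hcirc.2 {i} (by
    rw [Finset.ssubset_iff_subset_ne]
    constructor
    · intro k hk; simp at hk; simp [hk]
    · intro h; have : e0 ∈ ({i} : Finset (Fin n)) := by rw [h]; simp
      simp at this; exact hi0 this.symm)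
  simpa [MatroidRk.Indep] using h

lemma r_e0e1 : M.r {e0, e1} = 2 := by
  have h := hcirc.2 {e0, e1} (by
    rw [Finset.ssubset_iff_subset_ne]
    constructor
    · intro k hk; simp at hk; rcases hk with h | h <;> simp [h]
    · intro h; have : i ∈ ({e0, e1} : Finset (Fin n)) := by rw [h]; simp
      simp at this; rcases this with h | h
      · exact hi0 h
      · exact hi1 h)
  rw [MatroidRk.Indep, Finset.card_insert_of_notMem (by simp [h01]),
    Finset.card_singleton] at h
  exact h

lemma r_e0i : M.r {e0, i} = 2 := by
  have h := hcirc.2 {e0, i} (by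
    rw [Finset.ssubset_iff_subset_ne]
    constructor
    · intro k hk; simp at hk; rcases hk with h | h <;> simp [h]
    · intro h; have : e1 ∈ ({e0, i} : Finset (Fin n)) := by rw [h]; simp
      simp at this; rcases this with h | h
      · exact h01 h.symm
      · exact hi1 h.symm)
  rw [MatroidRk.Indep, Finset.card_insert_of_notMem (by simp [Ne.symm hi0]),
    Finset.card_singleton] at h
  exact h

lemma r_e1i : M.r {e1, i} = 2 := by
  have h := hcirc.2 {e1, i} (by
    rw [Finset.ssubset_iff_subset_ne]
    constructor
    · intro k hk; simp at hk; rcases hk with h | h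
      · simp [h]
      · simp [h]
    · intro h; have : e0 ∈ ({e1, i} : Finset (Fin n)) := by rw [h]; simp
      simp at this; rcases this with h | h
      · exact h01 h
      · exact hi0 h.symm)
  rw [MatroidRk.Indep, Finset.card_insert_of_notMem (by simp [Ne.symm hi1]),
    Finset.card_singleton] at h
  exact h

include hpar

lemma cl2_char (j : Fin n) (hj : M.r {j} = 1) (hj0 : j ≠ e0) (hj1 : j ≠ e1) :
    j = i ∨ M.Parallel j i := by
  by_cases hji : j = i
  · exact Or.inl hji
  · right
    rcases hpar j (by simp [hj0, hj1, hji]) with h | h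
    · exact h
    · rw [MatroidRk.IsLoop] at h; omega

lemma cl2_pair (j k : Fin n) (hj : M.r {j} = 1) (hj0 : j ≠ e0) (hj1 : j ≠ e1)
    (hk : M.r {k} = 1) (hk0 : k ≠ e0) (hk1 : k ≠ e1) :
    M.r {j, k} ≤ 1 := by
  by_cases hjk : j = k
  · subst hjk
    have hp : ({j, j} : Finset (Fin n)) = {j} := by simp
    rw [hp]; omega
  rcases cl2_char M e0 e1 i h01 hi0 hi1 hcirc hpar j hj hj0 hj1 with hji | hPj
  · rcases cl2_char M e0 e1 i h01 hi0 hi1 hcirc hpar k hk hk0 hk1 with hki | hPk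
    · rw [hji, hki] at hjk; omega
    · rw [hji, Finset.pair_comm]; exact hPk.2.2.2.le
  · rcases cl2_char M e0 e1 i h01 hi0 hi1 hcirc hpar k hk hk0 hk1 with hki | hPk
    · rw [hki]; exact hPj.2.2.2.le
    · have hsub := M.submod {j, i} {i, k}
      have hint : M.r {i} ≤ M.r (({j, i} : Finset (Fin n)) ∩ {i, k}) := M.mono (by simp)
      have hun : ({j, k} : Finset (Fin n)) ⊆ {j, i} ∪ {i, k} := by
        intro x; simp; tauto
      have hmon := M.mono hun
      have h2 := hPj.2.2.2
      have h3 : M.r {i, k} = 1 := by rw [Finset.pair_comm]; exact hPk.2.2.2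
      have h4 := r_i M e0 e1 i h01 hi0 hi1 hcirc
      omega

lemma cl2_pair_e0 (z : Fin n) (hz : M.r {z} = 1) (hz0 : z ≠ e0) (hz1 : z ≠ e1) :
    M.r {e0, z} = 2 := by
  rcases cl2_char M e0 e1 i h01 hi0 hi1 hcirc hpar z hz hz0 hz1 with hzi | hPz
  · rw [hzi]; exact r_e0i M e0 e1 i h01 hi0 hi1 hcirc
  · have hle : M.r {e0, z} ≤ 2 := le_trans (M.le_card _)
      (by rw [Finset.card_insert_of_notMem (by simp [Ne.symm hz0]), Finset.card_singleton])
    have hsub := M.submod {e0, z} {i, z}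
    have hint : M.r {z} ≤ M.r (({e0, z} : Finset (Fin n)) ∩ {i, z}) := M.mono (by simp)
    have hun : ({e0, i} : Finset (Fin n)) ⊆ {e0, z} ∪ {i, z} := by intro x; simp; tauto
    have hmon := M.mono hun
    have h2 : M.r {i, z} = 1 := by rw [Finset.pair_comm]; exact hPz.2.2.2
    have h3 := r_e0i M e0 e1 i h01 hi0 hi1 hcirc
    omega

lemma cl2_pair_e1 (z : Fin n) (hz : M.r {z} = 1) (hz0 : z ≠ e0) (hz1 : z ≠ e1) :
    M.r {e1, z} = 2 := by
  rcases cl2_char M e0 e1 i h01 hi0 hi1 hcirc hpar z hz hz0 hz1 with hzi | hPz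
  · rw [hzi]; exact r_e1i M e0 e1 i h01 hi0 hi1 hcirc
  · have hle : M.r {e1, z} ≤ 2 := le_trans (M.le_card _)
      (by rw [Finset.card_insert_of_notMem (by simp [Ne.symm hz1]), Finset.card_singleton])
    have hsub := M.submod {e1, z} {i, z}
    have hint : M.r {z} ≤ M.r (({e1, z} : Finset (Fin n)) ∩ {i, z}) := M.mono (by simp)
    have hun : ({e1, i} : Finset (Fin n)) ⊆ {e1, z} ∪ {i, z} := by intro x; simp; tauto
    have hmon := M.mono hun
    have h2 : M.r {i, z} = 1 := by rw [Finset.pair_comm]; exact hPz.2.2.2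
    have h3 := r_e1i M e0 e1 i h01 hi0 hi1 hcirc
    omega

lemma trichotomy (j : Fin n) (hj0 : j ≠ e0) (hj1 : j ≠ e1) :
    M.r {j} = 1 ∨ M.r {j} = 0 := by
  by_cases hji : j = i
  · rw [hji]; exact Or.inl (r_i M e0 e1 i h01 hi0 hi1 hcirc)
  rcases hpar j (by simp [hj0, hj1, hji]) with h | h
  · exact Or.inl h.2.1
  · exact Or.inr h

end Ranks

-- ===================== construction-specific definitions =====================

def swapUY (V m : ℕ) : (Fin V × (Fin V × Fin m)) ≃ (Fin V × (Fin V × Fin m)) :=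
  ⟨fun ω => (ω.2.1, (ω.1, ω.2.2)), fun ω => (ω.2.1, (ω.1, ω.2.2)),
   fun ω => rfl, fun ω => rfl⟩

def rotUW (V m : ℕ) : ((Fin V × Fin m) × Fin V) ≃ (Fin V × (Fin V × Fin m)) :=
  ⟨fun x => (x.1.1, (x.2, x.1.2)), fun ω => ((ω.1, ω.2.2), ω.2.1),
   fun x => rfl, fun ω => rfl⟩

def shear (V m : ℕ) [NeZero V] : (Fin V × (Fin V × Fin m)) ≃ (Fin V × (Fin V × Fin m)) :=
  ⟨fun ω => (ω.1 - ω.2.1, ω.2), fun ω => (ω.1 + ω.2.1, ω.2),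
   fun ω => by simp, fun ω => by simp⟩

def tripEquiv (V m : ℕ) : Fin (V * (V * m)) ≃ (Fin V × (Fin V × Fin m)) :=
  finProdFinEquiv.symm.trans ((Equiv.refl (Fin V)).prodCongr finProdFinEquiv.symm)

def Xvar {n : ℕ} (M : MatroidRk n) (e0 e1 : Fin n) (V m : ℕ) [NeZero V]
    (j : Fin n) (ω : Fin V × (Fin V × Fin m)) : ℕ :=
  if j = e0 then Nat.pair ω.1.val ω.2.2.val
  else if j = e1 then Nat.pair (ω.1 + ω.2.1).val ω.2.2.val
  else if M.r {j} = 1 then ω.2.1.val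
  else 0

/-- Matúš-type inner bound: for `M` of rank 2 spanning an extreme ray of
`Γ_n` with a circuit `{1,2,i}` such that every other element is parallel to `i` or a loop,
if `v ∈ χ_M`, `log(v-1) < a ≤ log v` and `a + b ≥ log v` with `b ≥ 0`, then
`a·r_M + b·r_{U_{1,2}^n}` is entropic. -/
theorem stmt10 (n : ℕ) (hn : 2 ≤ n) (M : MatroidRk n)
    (hext : SpansExtremeRay M.rr) (hrk : M.r Finset.univ = 2)
    (hC : ∃ i : Fin n, i ∉ ({⟨0, by omega⟩, ⟨1, by omega⟩} : Finset (Fin n)) ∧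
      M.IsCircuit {⟨0, by omega⟩, ⟨1, by omega⟩, i} ∧
      ∀ j : Fin n, j ∉ ({⟨0, by omega⟩, ⟨1, by omega⟩, i} : Finset (Fin n)) →
        M.Parallel j i ∨ M.IsLoop j)
    (v : ℤ) (hv : v ∈ chi M) (a b : ℝ) (hb : 0 ≤ b)
    (ha1 : Real.log ((v : ℝ) - 1) < a) (ha2 : a ≤ Real.log (v : ℝ))
    (hab : Real.log (v : ℝ) ≤ a + b) :
    IsEntropic (fun A => a * M.rr A + b * rUone n 2 A) := by
  classical
  obtain ⟨i, hiMem, hcirc0, hpar0⟩ := hC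
  have hv2 : 2 ≤ v := hv.1
  set e0 : Fin n := ⟨0, by omega⟩ with he0
  set e1 : Fin n := ⟨1, by omega⟩ with he1
  have hcirc : M.IsCircuit {e0, e1, i} := hcirc0
  have hpar : ∀ j, j ∉ ({e0, e1, i} : Finset (Fin n)) → M.Parallel j i ∨ M.IsLoop j :=
    hpar0
  have h01 : e0 ≠ e1 := by
    intro h
    have := congrArg Fin.val h
    simp [he0, he1] at this
  have hi0 : i ≠ e0 := by
    intro h; exact hiMem (by rw [h]; exact Finset.mem_insert_self _ _)
  have hi1 : i ≠ e1 := by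
    intro h
    exact hiMem (by rw [h]; exact Finset.mem_insert_of_mem (Finset.mem_singleton_self _))
  -- numeric setup
  set V : ℕ := v.toNat with hVdef
  have hV2 : 2 ≤ V := by omega
  have hV0 : 0 < V := by omega
  have hVcast : ((V : ℕ) : ℝ) = ((v : ℤ) : ℝ) := by
    have : ((V : ℕ) : ℤ) = v := Int.toNat_of_nonneg (by omega)
    exact_mod_cast this
  have hVRpos : (0:ℝ) < (V:ℕ) := by exact_mod_cast hV0
  have ha0 : 0 < a := by
    refine lt_of_le_of_lt (Real.log_nonneg ?_) ha1
    have : (2:ℝ) ≤ (v:ℝ) := by exact_mod_cast hv2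
    linarith
  have halog : a ≤ Real.log V := by rw [hVcast]; exact ha2
  set c : ℝ := a + b - Real.log V with hcdef
  have hc0 : 0 ≤ c := by
    rw [hcdef, hVcast]; linarith
  set m : ℕ := ⌈Real.exp c⌉₊ + 1 with hmdef
  have hm2 : 2 ≤ m := by
    have : 1 ≤ ⌈Real.exp c⌉₊ := Nat.one_le_ceil_iff.mpr (Real.exp_pos c)
    omega
  have hmlog : c ≤ Real.log m := by
    rw [Real.le_log_iff_exp_le (by exact_mod_cast (by omega : 0 < m) : (0:ℝ) < (m:ℕ))]
    calc Real.exp c ≤ ⌈Real.exp c⌉₊ := Nat.le_ceil _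
    _ ≤ (m:ℕ) := by exact_mod_cast Nat.le_succ _
  obtain ⟨qY, hqY0, hqY1, hqYH⟩ := exists_pmf_entropy V hV2 a ha0.le halog
  obtain ⟨qW, hqW0, hqW1, hqWH⟩ := exists_pmf_entropy m hm2 c hc0 hmlog
  haveI : NeZero V := ⟨by omega⟩
  haveI : Nonempty (Fin V) := ⟨⟨0, by omega⟩⟩
  haveI : Nonempty (Fin m) := ⟨⟨0, by omega⟩⟩
  -- the distribution
  set P : (Fin V × (Fin V × Fin m)) → ℝ :=
    fun ω => ((V:ℕ):ℝ)⁻¹ * (qY ω.2.1 * qW ω.2.2) with hPdef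
  have hP0 : ∀ ω, 0 ≤ P ω := by
    intro ω; rw [hPdef]
    exact mul_nonneg (by positivity) (mul_nonneg (hqY0 _) (hqW0 _))
  have hUsum : ∑ _u : Fin V, ((V:ℕ):ℝ)⁻¹ = 1 := by
    rw [Finset.sum_const, Finset.card_univ, Fintype.card_fin, nsmul_eq_mul]
    field_simp
  have hUH : ∑ _u : Fin V, Real.negMulLog (((V:ℕ):ℝ)⁻¹) = Real.log V := by
    rw [Finset.sum_const, Finset.card_univ, Fintype.card_fin, nsmul_eq_mul,
      Real.negMulLog, Real.log_inv]
    field_simp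
  have hYW1 : ∑ z : Fin V × Fin m, qY z.1 * qW z.2 = 1 := by
    rw [Fintype.sum_prod_type]
    simp_rw [← Finset.mul_sum, hqW1, mul_one]
    exact hqY1
  have hUW1 : ∑ z : Fin V × Fin m, ((V:ℕ):ℝ)⁻¹ * qW z.2 = 1 := by
    rw [Fintype.sum_prod_type]
    have hinner : ∑ w : Fin m, ((V:ℕ):ℝ)⁻¹ * qW w = ((V:ℕ):ℝ)⁻¹ := by
      rw [← Finset.mul_sum, hqW1, mul_one]
    simp_rw [hinner]
    exact hUsum
  have hPsum : ∑ ω, P ω = 1 := by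
    rw [hPdef, Fintype.sum_prod_type]
    have hinner : ∑ z : Fin V × Fin m, ((V:ℕ):ℝ)⁻¹ * (qY z.1 * qW z.2) = ((V:ℕ):ℝ)⁻¹ := by
      rw [← Finset.mul_sum, hYW1, mul_one]
    simp_rw [hinner]
    exact hUsum
  -- canonical entropies
  have HYW : ∑ z : Fin V × Fin m, Real.negMulLog (qY z.1 * qW z.2) = a + c := by
    have h1 : ∑ z : Fin V × Fin m, Real.negMulLog (qY z.1 * qW z.2)
        = (∑ w, qW w) * (∑ y, Real.negMulLog (qY y))
          + (∑ y, qY y) * (∑ w, Real.negMulLog (qW w)) := sum_negMulLog_mul' qY qW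
    rw [h1, hqW1, hqY1, hqYH, hqWH]; ring
  have HUWsum : ∑ z : Fin V × Fin m, Real.negMulLog (((V:ℕ):ℝ)⁻¹ * qW z.2)
      = Real.log V + c := by
    have h1 : ∑ z : Fin V × Fin m, Real.negMulLog (((V:ℕ):ℝ)⁻¹ * qW z.2)
        = (∑ w, qW w) * (∑ _u : Fin V, Real.negMulLog (((V:ℕ):ℝ)⁻¹))
          + (∑ _u : Fin V, ((V:ℕ):ℝ)⁻¹) * (∑ w, Real.negMulLog (qW w)) :=
      sum_negMulLog_mul' (fun _ : Fin V => ((V:ℕ):ℝ)⁻¹) qW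
    rw [h1, hqW1, hUsum, hUH, hqWH]; ring
  have HY : Hent P (fun ω => ω.2.1) = a := by
    rw [← Hent_reindex' (swapUY V m) P (fun ω => ω.2.1)]
    have hp : P ∘ (swapUY V m) = fun ω : Fin V × (Fin V × Fin m) =>
        qY ω.1 * (((V:ℕ):ℝ)⁻¹ * qW ω.2.2) := by
      funext ω; rw [hPdef]; show ((V:ℕ):ℝ)⁻¹ * (qY ω.1 * qW ω.2.2) = _; ring
    have hx : ((fun ω : Fin V × (Fin V × Fin m) => ω.2.1) ∘ (swapUY V m))
        = (Prod.fst : Fin V × (Fin V × Fin m) → Fin V) := rfl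
    rw [hp, hx]
    have h2 : Hent (fun ω : Fin V × (Fin V × Fin m) => qY ω.1 * (((V:ℕ):ℝ)⁻¹ * qW ω.2.2))
        Prod.fst = ∑ y, Real.negMulLog (qY y) :=
      Hent_fst' qY (fun z : Fin V × Fin m => ((V:ℕ):ℝ)⁻¹ * qW z.2) hUW1
    rw [h2, hqYH]
  have HUW : Hent P (fun ω => (ω.1, ω.2.2)) = Real.log V + c := by
    rw [← Hent_reindex' (rotUW V m) P (fun ω => (ω.1, ω.2.2))]
    have hp : P ∘ (rotUW V m) = fun x : (Fin V × Fin m) × Fin V =>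
        (((V:ℕ):ℝ)⁻¹ * qW x.1.2) * qY x.2 := by
      funext x; rw [hPdef]
      show ((V:ℕ):ℝ)⁻¹ * (qY x.2 * qW x.1.2) = _; ring
    have hx : ((fun ω : Fin V × (Fin V × Fin m) => (ω.1, ω.2.2)) ∘ (rotUW V m))
        = (Prod.fst : (Fin V × Fin m) × Fin V → Fin V × Fin m) := rfl
    rw [hp, hx]
    have h2 : Hent (fun x : (Fin V × Fin m) × Fin V => (((V:ℕ):ℝ)⁻¹ * qW x.1.2) * qY x.2)
        Prod.fst = ∑ z : Fin V × Fin m, Real.negMulLog (((V:ℕ):ℝ)⁻¹ * qW z.2) :=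
      Hent_fst' (fun z : Fin V × Fin m => ((V:ℕ):ℝ)⁻¹ * qW z.2) qY hqY1
    rw [h2, HUWsum]
  have HU'W : Hent P (fun ω => (ω.1 + ω.2.1, ω.2.2)) = Real.log V + c := by
    rw [← Hent_reindex' (shear V m) P (fun ω => (ω.1 + ω.2.1, ω.2.2))]
    have hp : P ∘ (shear V m) = P := by
      funext ω; rw [hPdef]; rfl
    have hx : ((fun ω : Fin V × (Fin V × Fin m) => (ω.1 + ω.2.1, ω.2.2)) ∘ (shear V m))
        = fun ω : Fin V × (Fin V × Fin m) => (ω.1, ω.2.2) := by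
      funext ω
      show (ω.1 - ω.2.1 + ω.2.1, ω.2.2) = (ω.1, ω.2.2)
      rw [sub_add_cancel]
    rw [hp, hx, HUW]
  have Hfull : Hent P (fun ω => ω) = Real.log V + (a + c) := by
    have hid : Hent P (fun ω => ω) = Hent P id := rfl
    rw [hid, Hent_id', hPdef]
    have h1 : ∑ x : Fin V × (Fin V × Fin m),
        Real.negMulLog (((V:ℕ):ℝ)⁻¹ * (qY x.2.1 * qW x.2.2))
        = (∑ z : Fin V × Fin m, qY z.1 * qW z.2) * (∑ _u : Fin V, Real.negMulLog (((V:ℕ):ℝ)⁻¹))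
          + (∑ _u : Fin V, ((V:ℕ):ℝ)⁻¹)
            * (∑ z : Fin V × Fin m, Real.negMulLog (qY z.1 * qW z.2)) :=
      sum_negMulLog_mul' (fun _ : Fin V => ((V:ℕ):ℝ)⁻¹)
        (fun z : Fin V × Fin m => qY z.1 * qW z.2)
    rw [h1, hYW1, hUsum, hUH, HYW]; ring
  -- rUone evaluation
  have hUone : ∀ A : Finset (Fin n), rUone n 2 A = if e0 ∈ A ∨ e1 ∈ A then 1 else 0 := by
    intro A
    simp only [rUone]
    by_cases h : e0 ∈ A ∨ e1 ∈ A
    · rw [if_pos h, if_pos]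
      rcases h with h | h
      · exact ⟨e0, Finset.mem_inter.mpr ⟨h, Finset.mem_filter.mpr
          ⟨Finset.mem_univ _, by rw [he0]; norm_num⟩⟩⟩
      · exact ⟨e1, Finset.mem_inter.mpr ⟨h, Finset.mem_filter.mpr
          ⟨Finset.mem_univ _, by rw [he1]; norm_num⟩⟩⟩
    · rw [if_neg h, if_neg]
      rintro ⟨x, hx⟩
      rw [Finset.mem_inter] at hx
      obtain ⟨hxA, hx2⟩ := hx
      simp only [alphaSet, Finset.mem_filter, Finset.mem_univ, true_and] at hx2
      have hval : (x:ℕ) = 0 ∨ (x:ℕ) = 1 := by omega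
      rcases hval with h' | h'
      · exact h (Or.inl ((by rw [he0]; exact Fin.ext (by simpa using h') : x = e0) ▸ hxA))
      · exact h (Or.inr ((by rw [he1]; exact Fin.ext (by simpa using h') : x = e1) ▸ hxA))
  -- rank tools
  have hr2 : ∀ A : Finset (Fin n), M.r A ≤ 2 := fun A => hrk ▸ M.mono (Finset.subset_univ A)
  have hloops : ∀ A : Finset (Fin n),
      ¬(∃ z, z ∈ A ∧ M.r {z} = 1 ∧ z ≠ e0 ∧ z ≠ e1) →
      ∀ j ∈ A, j ≠ e0 → j ≠ e1 → M.r {j} = 0 := by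
    intro A h2 j hj hj0 hj1
    rcases trichotomy M e0 e1 i h01 hi0 hi1 hcirc hpar j hj0 hj1 with h | h
    · exact absurd ⟨j, hj, h, hj0, hj1⟩ h2
    · exact h
  have rank2 : ∀ (A : Finset (Fin n)) (x y : Fin n), x ∈ A → y ∈ A → M.r {x, y} = 2 →
      M.r A = 2 := by
    intro A x y hx hy hxy
    have hsub : ({x, y} : Finset (Fin n)) ⊆ A := by
      intro t ht; simp at ht; rcases ht with rfl | rfl <;> assumption
    have h1 := M.mono hsub
    have h3 := hr2 A
    omega
  have rank1 : ∀ (A : Finset (Fin n)) (x : Fin n), x ∈ A → M.r {x} = 1 →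
      (∀ j ∈ A, M.r {x, j} ≤ 1) → M.r A = 1 := by
    intro A x hx hx1 hcond
    have hup : M.r A ≤ 1 :=
      le_trans (M.mono (Finset.subset_insert x A)) (M.rank_le_one x A hx1 hcond)
    have hlow := M.mono (Finset.singleton_subset_iff.mpr hx)
    omega
  -- the final construction
  refine ⟨V * (V * m), P ∘ ⇑(tripEquiv V m),
    fun j => Xvar M e0 e1 V m j ∘ ⇑(tripEquiv V m), fun ω => hP0 _, ?_, ?_⟩
  · exact (Equiv.sum_comp (tripEquiv V m) P).trans hPsum
  intro A
  show a * M.rr A + b * rUone n 2 A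
      = Hent (P ∘ ⇑(tripEquiv V m)) (joint (fun j => Xvar M e0 e1 V m j ∘ ⇑(tripEquiv V m)) A)
  have hjoint : joint (fun j => Xvar M e0 e1 V m j ∘ ⇑(tripEquiv V m)) A
      = (joint (Xvar M e0 e1 V m) A) ∘ ⇑(tripEquiv V m) := rfl
  rw [hjoint, Hent_reindex' (tripEquiv V m) P (joint (Xvar M e0 e1 V m) A)]
  -- coordinates of the joint variable
  have hval0 : ∀ (h0 : e0 ∈ A) (ω : Fin V × (Fin V × Fin m)),
      joint (Xvar M e0 e1 V m) A ω ⟨e0, h0⟩ = Nat.pair ω.1.val ω.2.2.val := by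
    intro h0 ω
    show Xvar M e0 e1 V m e0 ω = _
    unfold Xvar
    rw [if_pos rfl]
  have hval1 : ∀ (h1 : e1 ∈ A) (ω : Fin V × (Fin V × Fin m)),
      joint (Xvar M e0 e1 V m) A ω ⟨e1, h1⟩ = Nat.pair (ω.1 + ω.2.1).val ω.2.2.val := by
    intro h1 ω
    show Xvar M e0 e1 V m e1 ω = _
    unfold Xvar
    rw [if_neg (Ne.symm h01), if_pos rfl]
  have hvalz : ∀ (z : Fin n) (hz : z ∈ A), M.r {z} = 1 → z ≠ e0 → z ≠ e1 →
      ∀ ω : Fin V × (Fin V × Fin m),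
      joint (Xvar M e0 e1 V m) A ω ⟨z, hz⟩ = ω.2.1.val := by
    intro z hz hz1 hz0 hz1' ω
    show Xvar M e0 e1 V m z ω = _
    unfold Xvar
    rw [if_neg hz0, if_neg hz1', if_pos hz1]
  by_cases h0 : e0 ∈ A
  · by_cases h1 : e1 ∈ A
    · -- e0 ∈ A, e1 ∈ A : full information
      have hrA : M.r A = 2 := rank2 A e0 e1 h0 h1 (r_e0e1 M e0 e1 i h01 hi0 hi1 hcirc)
      have hent : Hent P (joint (Xvar M e0 e1 V m) A)
          = Hent P (fun ω : Fin V × (Fin V × Fin m) => ω) :=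
        Hent_congr' P _ _
          (fun φ => ((⟨(Nat.unpair (φ ⟨e0, h0⟩)).1 % V, Nat.mod_lt _ (by omega)⟩ : Fin V),
            ((⟨(Nat.unpair (φ ⟨e1, h1⟩)).1 % V, Nat.mod_lt _ (by omega)⟩ : Fin V)
              - (⟨(Nat.unpair (φ ⟨e0, h0⟩)).1 % V, Nat.mod_lt _ (by omega)⟩ : Fin V),
             (⟨(Nat.unpair (φ ⟨e0, h0⟩)).2 % m, Nat.mod_lt _ (by omega)⟩ : Fin m))))
          (fun ω' j => Xvar M e0 e1 V m (↑j) ω')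
          (fun ω => by
            simp only [hval0 h0 ω, hval1 h1 ω, Nat.unpair_pair,
              Nat.mod_eq_of_lt ω.1.isLt, Nat.mod_eq_of_lt ω.2.2.isLt,
              Nat.mod_eq_of_lt (ω.1 + ω.2.1).isLt, Fin.eta, add_sub_cancel_left])
          (fun ω => rfl)
      rw [hent, Hfull, hUone A, if_pos (Or.inl h0)]
      simp only [MatroidRk.rr, hrA]
      rw [hcdef]
      push_cast
      ring
    · by_cases h2 : ∃ z, z ∈ A ∧ M.r {z} = 1 ∧ z ≠ e0 ∧ z ≠ e1
      · -- e0 ∈ A, a class-2 element in A : full information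
        obtain ⟨z, hzA, hz1, hz0, hz1'⟩ := h2
        have hrA : M.r A = 2 := rank2 A e0 z h0 hzA
          (cl2_pair_e0 M e0 e1 i h01 hi0 hi1 hcirc hpar z hz1 hz0 hz1')
        have hent : Hent P (joint (Xvar M e0 e1 V m) A)
            = Hent P (fun ω : Fin V × (Fin V × Fin m) => ω) :=
          Hent_congr' P _ _
            (fun φ => ((⟨(Nat.unpair (φ ⟨e0, h0⟩)).1 % V, Nat.mod_lt _ (by omega)⟩ : Fin V),
              ((⟨(φ ⟨z, hzA⟩) % V, Nat.mod_lt _ (by omega)⟩ : Fin V),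
               (⟨(Nat.unpair (φ ⟨e0, h0⟩)).2 % m, Nat.mod_lt _ (by omega)⟩ : Fin m))))
            (fun ω' j => Xvar M e0 e1 V m (↑j) ω')
            (fun ω => by
              simp only [hval0 h0 ω, hvalz z hzA hz1 hz0 hz1' ω, Nat.unpair_pair,
                Nat.mod_eq_of_lt ω.1.isLt, Nat.mod_eq_of_lt ω.2.2.isLt,
                Nat.mod_eq_of_lt ω.2.1.isLt, Fin.eta])
            (fun ω => rfl)
        rw [hent, Hfull, hUone A, if_pos (Or.inl h0)]
        simp only [MatroidRk.rr, hrA]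
        rw [hcdef]
        push_cast
        ring
      · -- only e0 (plus loops)
        have hrA : M.r A = 1 := by
          apply rank1 A e0 h0 (r_e0 M e0 e1 i h01 hi0 hi1 hcirc)
          intro j hj
          by_cases hje : j = e0
          · rw [hje]
            have hp : ({e0, e0} : Finset (Fin n)) = {e0} := by simp
            rw [hp, r_e0 M e0 e1 i h01 hi0 hi1 hcirc]
          · have hj1 : j ≠ e1 := fun h => h1 (h ▸ hj)
            have hjl := hloops A h2 j hj hje hj1
            have := M.pair_le_sum e0 j
            have := r_e0 M e0 e1 i h01 hi0 hi1 hcirc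
            omega
        have hent : Hent P (joint (Xvar M e0 e1 V m) A)
            = Hent P (fun ω : Fin V × (Fin V × Fin m) => (ω.1, ω.2.2)) :=
          Hent_congr' P _ _
            (fun φ => ((⟨(Nat.unpair (φ ⟨e0, h0⟩)).1 % V, Nat.mod_lt _ (by omega)⟩ : Fin V),
              (⟨(Nat.unpair (φ ⟨e0, h0⟩)).2 % m, Nat.mod_lt _ (by omega)⟩ : Fin m)))
            (fun t j => if (↑j : Fin n) = e0 then Nat.pair t.1.val t.2.val else 0)
            (fun ω => by
              simp only [hval0 h0 ω, Nat.unpair_pair,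
                Nat.mod_eq_of_lt ω.1.isLt, Nat.mod_eq_of_lt ω.2.2.isLt, Fin.eta])
            (fun ω => by
              funext j
              show (if (↑j : Fin n) = e0 then Nat.pair ω.1.val ω.2.2.val else 0)
                  = Xvar M e0 e1 V m (↑j) ω
              unfold Xvar
              by_cases hj : (↑j : Fin n) = e0
              · rw [if_pos hj, if_pos hj]
              · have hj1 : (↑j : Fin n) ≠ e1 := fun h => h1 (h ▸ j.2)
                rw [if_neg hj, if_neg hj, if_neg hj1,
                  if_neg (by have := hloops A h2 (↑j) j.2 hj hj1; omega)])
        rw [hent, HUW, hUone A, if_pos (Or.inl h0)]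
        simp only [MatroidRk.rr, hrA]
        rw [hcdef]
        push_cast
        ring
  · by_cases h1 : e1 ∈ A
    · by_cases h2 : ∃ z, z ∈ A ∧ M.r {z} = 1 ∧ z ≠ e0 ∧ z ≠ e1
      · -- e1 ∈ A, class-2 element : full information
        obtain ⟨z, hzA, hz1, hz0, hz1'⟩ := h2
        have hrA : M.r A = 2 := rank2 A e1 z h1 hzA
          (cl2_pair_e1 M e0 e1 i h01 hi0 hi1 hcirc hpar z hz1 hz0 hz1')
        have hent : Hent P (joint (Xvar M e0 e1 V m) A)
            = Hent P (fun ω : Fin V × (Fin V × Fin m) => ω) :=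
          Hent_congr' P _ _
            (fun φ => (((⟨(Nat.unpair (φ ⟨e1, h1⟩)).1 % V, Nat.mod_lt _ (by omega)⟩ : Fin V)
                - (⟨(φ ⟨z, hzA⟩) % V, Nat.mod_lt _ (by omega)⟩ : Fin V)),
              ((⟨(φ ⟨z, hzA⟩) % V, Nat.mod_lt _ (by omega)⟩ : Fin V),
               (⟨(Nat.unpair (φ ⟨e1, h1⟩)).2 % m, Nat.mod_lt _ (by omega)⟩ : Fin m))))
            (fun ω' j => Xvar M e0 e1 V m (↑j) ω')
            (fun ω => by
              simp only [hval1 h1 ω, hvalz z hzA hz1 hz0 hz1' ω, Nat.unpair_pair,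
                Nat.mod_eq_of_lt ω.2.1.isLt, Nat.mod_eq_of_lt ω.2.2.isLt,
                Nat.mod_eq_of_lt (ω.1 + ω.2.1).isLt, Fin.eta, add_sub_cancel_right])
            (fun ω => rfl)
        rw [hent, Hfull, hUone A, if_pos (Or.inr h1)]
        simp only [MatroidRk.rr, hrA]
        rw [hcdef]
        push_cast
        ring
      · -- only e1 (plus loops)
        have hrA : M.r A = 1 := by
          apply rank1 A e1 h1 (r_e1 M e0 e1 i h01 hi0 hi1 hcirc)
          intro j hj
          by_cases hje : j = e1
          · rw [hje]
            have hp : ({e1, e1} : Finset (Fin n)) = {e1} := by simp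
            rw [hp, r_e1 M e0 e1 i h01 hi0 hi1 hcirc]
          · have hj0 : j ≠ e0 := fun h => h0 (h ▸ hj)
            have hjl := hloops A h2 j hj hj0 hje
            have := M.pair_le_sum e1 j
            have := r_e1 M e0 e1 i h01 hi0 hi1 hcirc
            omega
        have hent : Hent P (joint (Xvar M e0 e1 V m) A)
            = Hent P (fun ω : Fin V × (Fin V × Fin m) => (ω.1 + ω.2.1, ω.2.2)) :=
          Hent_congr' P _ _
            (fun φ => ((⟨(Nat.unpair (φ ⟨e1, h1⟩)).1 % V, Nat.mod_lt _ (by omega)⟩ : Fin V),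
              (⟨(Nat.unpair (φ ⟨e1, h1⟩)).2 % m, Nat.mod_lt _ (by omega)⟩ : Fin m)))
            (fun t j => if (↑j : Fin n) = e1 then Nat.pair t.1.val t.2.val else 0)
            (fun ω => by
              simp only [hval1 h1 ω, Nat.unpair_pair,
                Nat.mod_eq_of_lt (ω.1 + ω.2.1).isLt, Nat.mod_eq_of_lt ω.2.2.isLt, Fin.eta])
            (fun ω => by
              funext j
              show (if (↑j : Fin n) = e1 then Nat.pair (ω.1 + ω.2.1).val ω.2.2.val else 0)
                  = Xvar M e0 e1 V m (↑j) ω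
              unfold Xvar
              by_cases hj : (↑j : Fin n) = e1
              · rw [if_pos hj, if_neg (show (↑j : Fin n) ≠ e0 by rw [hj]; exact Ne.symm h01),
                  if_pos hj]
              · have hj0 : (↑j : Fin n) ≠ e0 := fun h => h0 (h ▸ j.2)
                rw [if_neg hj, if_neg hj0, if_neg hj,
                  if_neg (by have := hloops A h2 (↑j) j.2 hj0 hj; omega)])
        rw [hent, HU'W, hUone A, if_pos (Or.inr h1)]
        simp only [MatroidRk.rr, hrA]
        rw [hcdef]
        push_cast
        ring
    · by_cases h2 : ∃ z, z ∈ A ∧ M.r {z} = 1 ∧ z ≠ e0 ∧ z ≠ e1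
      · -- only class-2 elements (plus loops)
        obtain ⟨z, hzA, hz1, hz0, hz1'⟩ := h2
        have hrA : M.r A = 1 := by
          apply rank1 A z hzA hz1
          intro j hj
          by_cases hje : j = z
          · rw [hje]
            have hp : ({z, z} : Finset (Fin n)) = {z} := by simp
            rw [hp]; omega
          · have hj0 : j ≠ e0 := fun h => h0 (h ▸ hj)
            have hj1 : j ≠ e1 := fun h => h1 (h ▸ hj)
            rcases trichotomy M e0 e1 i h01 hi0 hi1 hcirc hpar j hj0 hj1 with h | h
            · exact cl2_pair M e0 e1 i h01 hi0 hi1 hcirc hpar z j hz1 hz0 hz1' h hj0 hj1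
            · have := M.pair_le_sum z j
              omega
        have hent : Hent P (joint (Xvar M e0 e1 V m) A)
            = Hent P (fun ω : Fin V × (Fin V × Fin m) => ω.2.1) :=
          Hent_congr' P _ _
            (fun φ => (⟨(φ ⟨z, hzA⟩) % V, Nat.mod_lt _ (by omega)⟩ : Fin V))
            (fun y j => if M.r {(↑j : Fin n)} = 1 then y.val else 0)
            (fun ω => by
              simp only [hvalz z hzA hz1 hz0 hz1' ω,
                Nat.mod_eq_of_lt ω.2.1.isLt, Fin.eta])
            (fun ω => by
              funext j
              show (if M.r {(↑j : Fin n)} = 1 then ω.2.1.val else 0)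
                  = Xvar M e0 e1 V m (↑j) ω
              unfold Xvar
              have hj0 : (↑j : Fin n) ≠ e0 := fun h => h0 (h ▸ j.2)
              have hj1 : (↑j : Fin n) ≠ e1 := fun h => h1 (h ▸ j.2)
              rw [if_neg hj0, if_neg hj1])
        rw [hent, HY, hUone A, if_neg (by push_neg; exact ⟨h0, h1⟩)]
        simp only [MatroidRk.rr, hrA]
        push_cast
        ring
      · -- only loops
        have hrA : M.r A = 0 := by
          have hsum : ∑ x ∈ A, M.r {x} = 0 := Finset.sum_eq_zero (fun x hx =>
            hloops A h2 x hx (fun h => h0 (h ▸ hx)) (fun h => h1 (h ▸ hx)))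
          have := M.subadd A
          omega
        have hent : Hent P (joint (Xvar M e0 e1 V m) A)
            = Hent P (fun _ : Fin V × (Fin V × Fin m) => ()) :=
          Hent_congr' P _ _
            (fun _ => ())
            (fun _ j => 0)
            (fun ω => rfl)
            (fun ω => by
              funext j
              show (0 : ℕ) = Xvar M e0 e1 V m (↑j) ω
              unfold Xvar
              have hj0 : (↑j : Fin n) ≠ e0 := fun h => h0 (h ▸ j.2)
              have hj1 : (↑j : Fin n) ≠ e1 := fun h => h1 (h ▸ j.2)
              rw [if_neg hj0, if_neg hj1,
                if_neg (by have := hloops A h2 (↑j) j.2 hj0 hj1; omega)])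
        rw [hent, Hent_const' P (), hPsum, Real.negMulLog_one, hUone A,
          if_neg (by push_neg; exact ⟨h0, h1⟩)]
        simp only [MatroidRk.rr, hrA]
        push_cast
        ring
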